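/- arXiv:2309.07676 — 13 statements merged into one kernel-verified Lean document; each statement's English description precedes it below -/
import Mathlib

section
/- If (V,H) is a matroid, then (V, H^up) is a matroid. -/
variable {α : Type*} [DecidableEq α]

/-- A (finite) simplicial complex on vertex set `V`. -/
def IsComplex (V : Finset α) (H : Set (Finset α)) : Prop :=
  (∀ X ∈ H, X ⊆ V) ∧ (∀ v ∈ V, ({v} : Finset α) ∈ H) ∧
    (∀ X ∈ H, ∀ Y : Finset α, Y ⊆ X → Y ∈ H)

/-- The exchange property. -/
def HasExchange (H : Set (Finset α)) : Prop :=
  ∀ I ∈ H, ∀ J ∈ H, I.card = J.card + 1 → ∃ i ∈ I, i ∉ J ∧ insert i J ∈ H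

/-- A matroid: a simplicial complex satisfying the exchange property. -/
def IsMatroid (V : Finset α) (H : Set (Finset α)) : Prop :=
  IsComplex V H ∧ HasExchange H

/-- The up operator: `H^up = H ∪ { I ∪ {p} : I ∈ H, p ∈ V \ I }`. -/
def up (V : Finset α) (H : Set (Finset α)) : Set (Finset α) :=
  H ∪ {X | ∃ I ∈ H, ∃ p ∈ V, p ∉ I ∧ X = insert p I}

/-- Augmentation from exchange plus downward closure. -/
lemma aug_lemma {H : Set (Finset α)}
    (hdown : ∀ X ∈ H, ∀ Y : Finset α, Y ⊆ X → Y ∈ H)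
    (hex : HasExchange H) {A B : Finset α} (hA : A ∈ H) (hB : B ∈ H)
    (h : B.card + 1 ≤ A.card) : ∃ a ∈ A, a ∉ B ∧ insert a B ∈ H := by
  obtain ⟨A', hsub, hcard⟩ := Finset.exists_subset_card_eq h
  obtain ⟨a, ha, hnb, hins⟩ := hex A' (hdown A hA A' hsub) B hB hcard
  exact ⟨a, hsub ha, hnb, hins⟩

/-- If `(V,H)` is a matroid, then `(V, H^up)` is a matroid. -/
theorem up_isMatroid (V : Finset α) (H : Set (Finset α)) (hV : V.Nonempty)
    (hH : IsMatroid V H) : IsMatroid V (up V H) := by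
  classical
  obtain ⟨⟨hsubV, hsing, hdown⟩, hex⟩ := hH
  have hup_subV : ∀ X ∈ up V H, X ⊆ V := by
    rintro X (hX | ⟨I, hI, p, hp, hpI, rfl⟩)
    · exact hsubV X hX
    · exact Finset.insert_subset hp (hsubV I hI)
  refine ⟨⟨hup_subV, fun v hv => Or.inl (hsing v hv), ?_⟩, ?_⟩
  · -- downward closed
    rintro X (hX | ⟨I, hI, p, hp, hpI, rfl⟩) Y hY
    · exact Or.inl (hdown X hX Y hY)
    · by_cases hpY : p ∈ Y
      · refine Or.inr ⟨Y.erase p, hdown I hI _ ?_, p, hp, Finset.notMem_erase p Y,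
          (Finset.insert_erase hpY).symm⟩
        intro x hx
        have hxY : x ∈ Y := Finset.mem_of_mem_erase hx
        have hxp : x ≠ p := Finset.ne_of_mem_erase hx
        have := hY hxY
        rcases Finset.mem_insert.mp this with h | h
        · exact absurd h hxp
        · exact h
      · refine Or.inl (hdown I hI Y ?_)
        intro x hx
        rcases Finset.mem_insert.mp (hY hx) with h | h
        · exact absurd (h ▸ hx) hpY
        · exact h
  · -- exchange
    intro I hI J hJ hcard
    by_cases hJH : J ∈ H
    · -- any element of I \ J works
      have : ¬ I ⊆ J := fun h => by
        have := Finset.card_le_card h; omega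
      obtain ⟨i, hiI, hiJ⟩ := Finset.not_subset.mp this
      exact ⟨i, hiI, hiJ, Or.inr ⟨J, hJH, i, hup_subV I hI hiI, hiJ, rfl⟩⟩
    · obtain ⟨J₀, hJ₀, q, hqV, hqJ₀, rfl⟩ := hJ.resolve_left hJH
      have hJcard : (insert q J₀).card = J₀.card + 1 := Finset.card_insert_of_notMem hqJ₀
      have key : ∃ a ∈ I, a ∉ J₀ ∧ insert a J₀ ∈ H := by
        rcases hI with hIH | ⟨I₀, hI₀, p, hpV, hpI₀, rfl⟩
        · exact aug_lemma hdown hex hIH hJ₀ (by omega)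
        · have hIcard : (insert p I₀).card = I₀.card + 1 :=
            Finset.card_insert_of_notMem hpI₀
          obtain ⟨a, ha, hnb, hins⟩ := hex I₀ hI₀ J₀ hJ₀ (by omega)
          exact ⟨a, Finset.mem_insert_of_mem ha, hnb, hins⟩
      obtain ⟨a, haI, haJ₀, hins⟩ := key
      have haq : a ≠ q := fun h => hJH (h ▸ hins)
      have haJ : a ∉ insert q J₀ := by
        simp [Finset.mem_insert, haq, haJ₀]
      refine ⟨a, haI, haJ, Or.inr ⟨insert a J₀, hins, q, hqV, ?_, ?_⟩⟩
      · simp [Finset.mem_insert, Ne.symm haq, hqJ₀]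
      · rw [Finset.insert_comm]
end

section
/- Let (V,H) be a paving complex of dimension d (i.e. all subsets of V of size at most d+1 whose size is at most d belong to H, and H ⊆ P_{≤ d+1}(V)). Then for every m ≥ 0, the m-th iterate of the up operator satisfies H^{up^m} = P_{≤ d+m+1}(V) \ { X ⊆ V : |X| = d+m+1 and no (d+1)-subset of X belongs to H }. -/
variable {α : Type*} [DecidableEq α]

/-- A paving complex of dimension `d`: `P_{≤d}(V) ⊆ H ⊆ P_{≤d+1}(V)` with a face
of size `d+1`. -/
def IsPav (V : Finset α) (H : Set (Finset α)) (d : ℕ) : Prop :=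
  IsComplex V H ∧ (∀ X : Finset α, X ⊆ V → X.card ≤ d → X ∈ H) ∧
    (∀ X ∈ H, X.card ≤ d + 1) ∧ (∃ X ∈ H, X.card = d + 1)

/-- For a paving complex of dimension `d` and any `m ≥ 0`, the `m`-th iterate of
the up operator equals `P_{≤ d+m+1}(V)` minus the sets of size exactly `d+m+1`
none of whose `(d+1)`-subsets is a face. -/
theorem iterate_up_pav (V : Finset α) (H : Set (Finset α)) (hV : V.Nonempty)
    (d : ℕ) (hH : IsPav V H d) (m : ℕ) :
    (up V)^[m] H =
      {X : Finset α | X ⊆ V ∧ X.card ≤ d + m + 1} \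
        {X : Finset α | X.card = d + m + 1 ∧ ∀ Z ⊆ X, Z.card = d + 1 → Z ∉ H} := by
  induction m with
  | zero =>
    simp only [Function.iterate_zero, id]
    ext X
    constructor
    · intro hX
      refine ⟨⟨hH.1.1 X hX, hH.2.2.1 X hX⟩, ?_⟩
      rintro ⟨hcard, hbad⟩
      exact hbad X (subset_refl X) hcard hX
    · rintro ⟨⟨hXV, hcard⟩, hnb⟩
      simp only [Set.mem_setOf_eq] at hnb
      push_neg at hnb
      rcases Nat.lt_or_ge X.card (d + 1) with h | h
      · exact hH.2.1 X hXV (by omega)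
      · have hc : X.card = d + 0 + 1 := by omega
        obtain ⟨Z, hZX, hZc, hZH⟩ := hnb hc
        have : Z = X := Finset.eq_of_subset_of_card_le hZX (by omega)
        rwa [this] at hZH
  | succ m ih =>
    rw [Function.iterate_succ_apply', ih]
    ext X
    constructor
    · intro hX
      rcases hX with hX | ⟨I, hI, p, hpV, hpI, rfl⟩
      · obtain ⟨⟨hXV, hc⟩, _⟩ := hX
        refine ⟨⟨hXV, by omega⟩, ?_⟩
        rintro ⟨hc2, _⟩
        omega
      · obtain ⟨⟨hIV, hc⟩, hnb⟩ := hI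
        have hcard : (insert p I).card = I.card + 1 := Finset.card_insert_of_notMem hpI
        refine ⟨⟨Finset.insert_subset hpV hIV, by omega⟩, ?_⟩
        rintro ⟨hc2, hall⟩
        simp only [Set.mem_setOf_eq] at hnb
        push_neg at hnb
        obtain ⟨Z, hZI, hZc, hZH⟩ := hnb (by omega)
        exact hall Z (hZI.trans (Finset.subset_insert p I)) hZc hZH
    · rintro ⟨⟨hXV, hc⟩, hnb⟩
      simp only [Set.mem_setOf_eq] at hnb
      push_neg at hnb
      rcases Nat.lt_or_ge X.card (d + m + 2) with h | h
      · -- X.card ≤ d + m + 1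
        by_cases hb : X.card = d + m + 1 ∧ ∀ Z ⊆ X, Z.card = d + 1 → Z ∉ H
        · -- bad at level m; use insert representation
          obtain ⟨hc1, _⟩ := hb
          have hXne : X.Nonempty := Finset.card_pos.mp (by omega)
          obtain ⟨p, hpX⟩ := hXne
          refine Or.inr ⟨X.erase p, ⟨⟨(Finset.erase_subset p X).trans hXV, ?_⟩, ?_⟩,
            p, hXV hpX, Finset.notMem_erase p X, (Finset.insert_erase hpX).symm⟩
          · have := Finset.card_erase_of_mem hpX; omega
          · rintro ⟨hce, _⟩
            have := Finset.card_erase_of_mem hpX; omega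
        · exact Or.inl ⟨⟨hXV, by omega⟩, hb⟩
      · -- X.card = d + m + 2
        obtain ⟨Z, hZX, hZc, hZH⟩ := hnb (by omega)
        have hZlt : Z ⊂ X := lt_of_le_of_ne hZX (by
          intro h'; rw [h'] at hZc; omega)
        obtain ⟨p, hpX, hpZ⟩ := Finset.exists_of_ssubset hZlt
        refine Or.inr ⟨X.erase p, ⟨⟨(Finset.erase_subset p X).trans hXV, ?_⟩, ?_⟩,
          p, hXV hpX, Finset.notMem_erase p X, (Finset.insert_erase hpX).symm⟩
        · have := Finset.card_erase_of_mem hpX; omega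
        · rintro ⟨hce, hall⟩
          exact hall Z (Finset.subset_erase.mpr ⟨hZX, hpZ⟩) hZc hZH
end

section
/- Let Γ = (V,E) be a graph, viewed as a simplicial complex of dimension ≤ 1 (vertices and edges). Then for every m ≥ 0, Γ^{up^m} has as faces exactly the subsets of V of size at most m+2, except those of size exactly m+2 which are anticliques (independent sets) of Γ. -/
variable {α : Type*} [DecidableEq α]

/-- For a graph `Γ = (V,E)` (a simplicial complex of dimension at most 1), the
`m`-th iterate of the up operator has as faces exactly the subsets of `V` of size
at most `m+2`, except those of size exactly `m+2` which are anticliques of `Γ`. -/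
theorem iterate_up_graph (V : Finset α) (E : Set (Finset α)) (hV : V.Nonempty)
    (hE : IsComplex V E) (hdim : ∀ X ∈ E, X.card ≤ 2) (m : ℕ) :
    (up V)^[m] E =
      {X : Finset α | X ⊆ V ∧ X.card ≤ m + 2} \
        {X : Finset α | X.card = m + 2 ∧
          ∀ a ∈ X, ∀ b ∈ X, a ≠ b → ({a, b} : Finset α) ∉ E} := by
  induction m with
  | zero =>
    simp only [Function.iterate_zero, id_eq]
    ext X
    simp only [Set.mem_diff, Set.mem_setOf_eq]
    constructor
    · intro hX
      refine ⟨⟨hE.1 X hX, hdim X hX⟩, ?_⟩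
      rintro ⟨hcard, hanti⟩
      obtain ⟨a, b, hab, rfl⟩ := Finset.card_eq_two.mp hcard
      exact hanti a (by simp) b (by simp) hab hX
    · rintro ⟨⟨hXV, hcard⟩, hnot⟩
      rcases Nat.lt_or_ge X.card 2 with h2 | h2
      · obtain ⟨v, hv⟩ := hV
        rcases Nat.lt_or_ge X.card 1 with h1 | h1
        · have : X = ∅ := Finset.card_eq_zero.mp (Nat.lt_one_iff.mp h1)
          subst this
          exact hE.2.2 {v} (hE.2.1 v hv) ∅ (Finset.empty_subset _)
        · have hx1 : X.card = 1 := le_antisymm (Nat.lt_succ_iff.mp h2) h1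
          obtain ⟨a, rfl⟩ := Finset.card_eq_one.mp hx1
          exact hE.2.1 a (hXV (Finset.mem_singleton_self a))
      · have hx2 : X.card = 2 := le_antisymm hcard h2
        push_neg at hnot
        obtain ⟨a, ha, b, hb, hab, habE⟩ := hnot hx2
        have hsub : ({a, b} : Finset α) ⊆ X := by
          intro x hx
          rcases Finset.mem_insert.mp hx with rfl | hx
          · exact ha
          · exact (Finset.mem_singleton.mp hx) ▸ hb
        have hXab : X = ({a, b} : Finset α) := by
          apply (Finset.eq_of_subset_of_card_le hsub ?_).symm
          rw [hx2, Finset.card_insert_of_notMem (by simpa using hab),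
            Finset.card_singleton]
        rw [hXab]; exact habE
  | succ m ih =>
    rw [Function.iterate_succ_apply', ih]
    ext X
    simp only [up, Set.mem_union, Set.mem_diff, Set.mem_setOf_eq]
    constructor
    · rintro (⟨⟨hXV, hcard⟩, hnot⟩ | ⟨I, ⟨⟨hIV, hIc⟩, hInot⟩, p, hpV, hpI, rfl⟩)
      · exact ⟨⟨hXV, hcard.trans (by omega)⟩, by rintro ⟨hc, -⟩; omega⟩
      · have hcard : (insert p I).card = I.card + 1 :=
          Finset.card_insert_of_notMem hpI
        refine ⟨⟨Finset.insert_subset hpV hIV, by omega⟩, ?_⟩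
        rintro ⟨hc, hanti⟩
        have hIc2 : I.card = m + 2 := by omega
        push_neg at hInot
        obtain ⟨a, ha, b, hb, hab, habE⟩ := hInot hIc2
        exact hanti a (Finset.mem_insert_of_mem ha) b (Finset.mem_insert_of_mem hb)
          hab habE
    · rintro ⟨⟨hXV, hcard⟩, hnot⟩
      rcases Nat.lt_or_ge X.card (m + 2) with hlt | hge
      · exact Or.inl ⟨⟨hXV, by omega⟩, by rintro ⟨hc, -⟩; omega⟩
      rcases Nat.lt_or_ge X.card (m + 3) with hlt | hge2
      · have hc : X.card = m + 2 := by omega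
        by_cases hanti : ∀ a ∈ X, ∀ b ∈ X, a ≠ b → ({a, b} : Finset α) ∉ E
        · obtain ⟨p, hp⟩ : X.Nonempty := Finset.card_pos.mp (by omega)
          refine Or.inr ⟨X.erase p, ⟨⟨(Finset.erase_subset _ _).trans hXV, ?_⟩, ?_⟩,
            p, hXV hp, Finset.notMem_erase p X, (Finset.insert_erase hp).symm⟩
          · rw [Finset.card_erase_of_mem hp]; omega
          · rintro ⟨hc', -⟩
            rw [Finset.card_erase_of_mem hp] at hc'; omega
        · exact Or.inl ⟨⟨hXV, by omega⟩, by rintro ⟨-, h⟩; exact hanti h⟩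
      · have hc : X.card = m + 3 := by omega
        have hnot' := hnot
        push_neg at hnot'
        obtain ⟨a, ha, b, hb, hab, habE⟩ := hnot' (by omega)
        have hltc : ({a, b} : Finset α).card < X.card := by
          rw [hc, Finset.card_insert_of_notMem (by simpa using hab),
            Finset.card_singleton]
          omega
        have hsd : (X \ ({a, b} : Finset α)).Nonempty := by
          rw [← Finset.card_pos]
          have := Finset.le_card_sdiff ({a, b} : Finset α) X
          omega
        obtain ⟨p, hpmem⟩ := hsd
        obtain ⟨hpX, hpab⟩ := Finset.mem_sdiff.mp hpmem
        have hap : a ≠ p := by rintro rfl; exact hpab (by simp)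
        have hbp : b ≠ p := by rintro rfl; exact hpab (by simp)
        refine Or.inr ⟨X.erase p, ⟨⟨(Finset.erase_subset _ _).trans hXV, ?_⟩, ?_⟩,
          p, hXV hpX, Finset.notMem_erase p X, (Finset.insert_erase hpX).symm⟩
        · rw [Finset.card_erase_of_mem hpX]; omega
        · rintro ⟨-, hanti⟩
          exact hanti a (Finset.mem_erase.mpr ⟨hap, ha⟩)
            b (Finset.mem_erase.mpr ⟨hbp, hb⟩) hab habE
end

section
/- Let (V,H) be a connected boolean representable simplicial complex of dimension at most 2 containing all singletons. Then its counting function α, given by α(n) = |H ∩ P_n(V)|, is unimodal. -/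
variable {α : Type*} [DecidableEq α]

/-- A flat of `(V,H)`: `F ⊆ V` such that for every face `X ⊆ F` and every
`p ∈ V \ F`, `X ∪ {p}` is a face. -/
def IsFlat (V : Finset α) (H : Set (Finset α)) (F : Finset α) : Prop :=
  F ⊆ V ∧ ∀ X ∈ H, X ⊆ F → ∀ p ∈ V, p ∉ F → insert p X ∈ H

/-- `z` belongs to the closure of `X` in the lattice of flats of `(V,H)`. -/
def inCl (V : Finset α) (H : Set (Finset α)) (X : Finset α) (z : α) : Prop :=
  ∀ F : Finset α, IsFlat V H F → X ⊆ F → z ∈ F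

/-- Boolean representable simplicial complex, via the standard criterion:
every nonempty face `X` has a point `x` outside the closure of `X \ {x}`. -/
def IsBRSC (V : Finset α) (H : Set (Finset α)) : Prop :=
  IsComplex V H ∧ ∀ X ∈ H, X.Nonempty → ∃ x ∈ X, ¬ inCl V H (X.erase x) x

/-- Unimodality of a function `ℕ → ℕ`. -/
def Unimodal (f : ℕ → ℕ) : Prop :=
  ∃ m : ℕ, (∀ i j : ℕ, i < j → j ≤ m → f i ≤ f j) ∧
    (∀ i j : ℕ, m ≤ i → i < j → f j ≤ f i)


open SimpleGraph in
/-- In a connected graph containing a triangle, #vertices ≤ #edges (as an injection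
statement into 2-element "edge" finsets of a face set). -/
lemma key_lemma (V : Finset α) (H : Set (Finset α))
    (hsub : ∀ X ∈ H, X ⊆ V)
    (hdown : ∀ X ∈ H, ∀ Y : Finset α, Y ⊆ X → Y ∈ H)
    (hconn : ∀ a ∈ V, ∀ b ∈ V,
      Relation.ReflTransGen (fun x y => x ≠ y ∧ ({x, y} : Finset α) ∈ H) a b)
    (htri : ∃ X ∈ H, X.card = 3) :
    (↑V : Set α).ncard ≤ {X : Finset α | X ∈ H ∧ X.card = 2}.ncard := by
  classical
  obtain ⟨X, hX, hX3⟩ := htri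
  obtain ⟨a, b, c, hab, hac, hbc, rfl⟩ := Finset.card_eq_three.mp hX3
  -- the 1-skeleton graph
  set G : SimpleGraph α :=
    { Adj := fun x y => x ≠ y ∧ ({x, y} : Finset α) ∈ H
      symm := by
        constructor
        intro x y ⟨h1, h2⟩
        exact ⟨h1.symm, by rwa [Finset.pair_comm]⟩
      loopless := ⟨fun x h => h.1 rfl⟩ } with hG
  have hadj : ∀ x y : α, G.Adj x y ↔ (x ≠ y ∧ ({x, y} : Finset α) ∈ H) := fun _ _ => Iff.rfl
  have haV : a ∈ V := hsub _ hX (by simp)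
  have hbV : b ∈ V := hsub _ hX (by simp)
  have hcV : c ∈ V := hsub _ hX (by simp)
  have hreach : ∀ v ∈ V, G.Reachable v a := by
    intro v hv
    rw [SimpleGraph.reachable_iff_reflTransGen]
    exact hconn v hv a haV
  -- parent function decreasing distance
  have hpar : ∀ v, v ∈ V → v ≠ a → ∃ w, G.Adj v w ∧ G.dist w a < G.dist v a := by
    intro v hv hva
    obtain ⟨p, hp⟩ := (hreach v hv).exists_walk_length_eq_dist
    have hpos : 0 < G.dist v a := (hreach v hv).pos_dist_of_ne hva
    cases p with
    | nil => exact absurd rfl hva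
    | cons h q =>
      refine ⟨_, h, ?_⟩
      have := SimpleGraph.dist_le q
      simp [SimpleGraph.Walk.length_cons] at hp
      omega
  choose par hpar1 hpar2 using hpar
  -- modified parent: b and c get parent a
  set P : α → α := fun v =>
    if v = b then a else if v = c then a
    else if h : v ∈ V ∧ v ≠ a then par v h.1 h.2 else v with hP
  have hbca : ({b, c} : Finset α) ⊆ {a, b, c} := by intro x; simp; tauto
  have hPprop : ∀ v, v ∈ V → v ≠ a → G.Adj v (P v) ∧ G.dist (P v) a < G.dist v a := by
    intro v hv hva
    by_cases hvb : v = b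
    · subst hvb
      have hadjba : G.Adj v a := by
        refine ⟨hva, ?_⟩
        refine hdown _ hX _ ?_
        intro x; simp; tauto
      have : P v = a := by simp [hP]
      rw [this]
      exact ⟨hadjba, by
        simpa [SimpleGraph.dist_self] using (hreach v hv).pos_dist_of_ne hva⟩
    by_cases hvc : v = c
    · subst hvc
      have hadjca : G.Adj v a := by
        refine ⟨hva, ?_⟩
        refine hdown _ hX _ ?_
        intro x; simp; tauto
      have : P v = a := by simp [hP, hvb]
      rw [this]
      exact ⟨hadjca, by
        simpa [SimpleGraph.dist_self] using (hreach v hv).pos_dist_of_ne hva⟩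
    · have : P v = par v hv hva := by simp [hP, hvb, hvc, hv, hva]
      rw [this]
      exact ⟨hpar1 v hv hva, hpar2 v hv hva⟩
  have hPb : P b = a := by simp [hP]
  have hPc : P c = a := by simp [hP, hbc.symm]
  -- the injection
  set g : α → Finset α := fun v => if v = a then {b, c} else {v, P v} with hg
  have hfin : {X : Finset α | X ∈ H ∧ X.card = 2}.Finite := by
    apply Set.Finite.subset (V.powerset : Finset (Finset α)).finite_toSet
    intro Y hY
    simp only [Finset.coe_powerset, Set.mem_preimage, Set.mem_powerset_iff,
      Finset.coe_subset]
    exact hsub _ hY.1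
  apply Set.ncard_le_ncard_of_injOn g _ _ hfin
  · -- maps to
    intro v hv
    simp only [Finset.mem_coe] at hv
    by_cases hva : v = a
    · subst hva
      simp only [hg, if_pos rfl]
      exact ⟨hdown _ hX _ hbca, Finset.card_pair hbc⟩
    · obtain ⟨hadjv, _⟩ := hPprop v hv hva
      simp only [hg, if_neg hva]
      exact ⟨hadjv.2, Finset.card_pair hadjv.1⟩
  · -- injective
    intro u hu v hv huv
    simp only [Finset.mem_coe] at hu hv
    by_cases hua : u = a <;> by_cases hva : v = a
    · rw [hua, hva]
    · exfalso
      simp only [hg, if_pos hua, if_neg hva] at huv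
      have hvmem : v ∈ ({b, c} : Finset α) := by rw [huv]; simp
      have hPva : P v = a := by
        rcases Finset.mem_insert.mp hvmem with h | h
        · rw [h, hPb]
        · rw [Finset.mem_singleton.mp h, hPc]
      have hamem : a ∈ ({b, c} : Finset α) := by rw [huv, hPva]; simp
      rcases Finset.mem_insert.mp hamem with h | h
      · exact hab h
      · exact hac (Finset.mem_singleton.mp h)
    · exfalso
      simp only [hg, if_neg hua, if_pos hva] at huv
      have humem : u ∈ ({b, c} : Finset α) := by rw [← huv]; simp
      have hPua : P u = a := by
        rcases Finset.mem_insert.mp humem with h | h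
        · rw [h, hPb]
        · rw [Finset.mem_singleton.mp h, hPc]
      have hamem : a ∈ ({b, c} : Finset α) := by rw [← huv, hPua]; simp
      rcases Finset.mem_insert.mp hamem with h | h
      · exact hab h
      · exact hac (Finset.mem_singleton.mp h)
    · simp only [hg, if_neg hua, if_neg hva] at huv
      by_contra hne
      have h1 : u ∈ ({v, P v} : Finset α) := by rw [← huv]; simp
      have h2 : v ∈ ({u, P u} : Finset α) := by rw [huv]; simp
      have hu' : u = P v := by
        rcases Finset.mem_insert.mp h1 with h | h
        · exact absurd h hne
        · exact Finset.mem_singleton.mp h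
      have hv' : v = P u := by
        rcases Finset.mem_insert.mp h2 with h | h
        · exact absurd h (Ne.symm hne)
        · exact Finset.mem_singleton.mp h
      have d1 := (hPprop u hu hua).2
      have d2 := (hPprop v hv hva).2
      rw [← hv'] at d1
      rw [← hu'] at d2
      omega

lemma S_facts (V : Finset α) (H : Set (Finset α)) (hV : V.Nonempty)
    (hsub : ∀ X ∈ H, X ⊆ V) (hsing : ∀ v ∈ V, ({v} : Finset α) ∈ H) :
    {X : Finset α | X ∈ H ∧ X.card = 1}.ncard = V.card := by
  classical
  have : {X : Finset α | X ∈ H ∧ X.card = 1} = (fun v => ({v} : Finset α)) '' ↑V := by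
    ext Y
    simp only [Set.mem_setOf_eq, Set.mem_image, Finset.mem_coe]
    constructor
    · rintro ⟨hY, hc⟩
      obtain ⟨v, rfl⟩ := Finset.card_eq_one.mp hc
      exact ⟨v, hsub _ hY (by simp), rfl⟩
    · rintro ⟨v, hv, rfl⟩
      exact ⟨hsing v hv, Finset.card_singleton v⟩
  rw [this, Set.ncard_image_of_injOn (fun x _ y _ h => by
    simpa using h), Set.ncard_coe_finset]

/-- The counting function of a connected boolean representable simplicial complex
of dimension at most 2 is unimodal. -/
theorem unimodal_counting_of_connected_dim_le_two (V : Finset α)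
    (H : Set (Finset α)) (hV : V.Nonempty) (hH : IsBRSC V H)
    (hdim : ∀ X ∈ H, X.card ≤ 3)
    (hconn : ∀ a ∈ V, ∀ b ∈ V,
      Relation.ReflTransGen (fun x y => x ≠ y ∧ ({x, y} : Finset α) ∈ H) a b) :
    Unimodal (fun n => {X : Finset α | X ∈ H ∧ X.card = n}.ncard) := by
  classical
  obtain ⟨⟨hsub, hsing, hdown⟩, -⟩ := hH
  set f : ℕ → ℕ := fun n => {X : Finset α | X ∈ H ∧ X.card = n}.ncard with hf
  have hf1 : f 1 = V.card := S_facts V H hV hsub hsing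
  have hf0 : f 0 ≤ 1 := by
    have hsub0 : {X : Finset α | X ∈ H ∧ X.card = 0} ⊆ {∅} := by
      rintro Y ⟨-, hY⟩
      simpa [Finset.card_eq_zero.mp hY] using rfl
    calc f 0 ≤ ({∅} : Set (Finset α)).ncard :=
          Set.ncard_le_ncard hsub0 (Set.finite_singleton _)
      _ = 1 := Set.ncard_singleton _
  have hf01 : f 0 ≤ f 1 := le_trans hf0 (by rw [hf1]; exact hV.card_pos)
  have hhigh : ∀ j, 4 ≤ j → f j = 0 := by
    intro j hj
    have : {X : Finset α | X ∈ H ∧ X.card = j} = ∅ := by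
      ext Y
      simp only [Set.mem_setOf_eq, Set.mem_empty_iff_false, iff_false, not_and]
      intro hY hc
      have := hdim Y hY
      omega
    simp only [hf, this, Set.ncard_empty]
  by_cases htri : ∃ X ∈ H, X.card = 3
  · have hkey : f 1 ≤ f 2 := by
      rw [hf1, ← Set.ncard_coe_finset]
      exact key_lemma V H hsub hdown hconn htri
    by_cases hte : f 3 ≤ f 2
    · refine ⟨2, ?_, ?_⟩
      · intro i j hij hj2
        interval_cases j
        · omega
        · interval_cases i; exact hf01
        · interval_cases i
          · exact le_trans hf01 hkey
          · exact hkey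
      · intro i j h2i hij
        rcases Nat.lt_or_ge j 4 with hj | hj
        · have hj3 : j = 3 := by omega
          have hi2 : i = 2 := by omega
          subst hj3; subst hi2; exact hte
        · rw [hhigh j hj]; exact Nat.zero_le _
    · push_neg at hte
      refine ⟨3, ?_, ?_⟩
      · intro i j hij hj3
        have h23 : f 2 ≤ f 3 := le_of_lt hte
        interval_cases j
        · omega
        · interval_cases i; exact hf01
        · interval_cases i
          · exact le_trans hf01 hkey
          · exact hkey
        · interval_cases i
          · exact le_trans hf01 (le_trans hkey h23)
          · exact le_trans hkey h23
          · exact h23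
      · intro i j h3i hij
        rw [hhigh j (by omega)]; exact Nat.zero_le _
  · push_neg at htri
    have hf3 : f 3 = 0 := by
      have : {X : Finset α | X ∈ H ∧ X.card = 3} = ∅ := by
        ext Y
        simp only [Set.mem_setOf_eq, Set.mem_empty_iff_false, iff_false, not_and]
        exact htri Y
      simp only [hf, this, Set.ncard_empty]
    by_cases hne : f 1 ≤ f 2
    · refine ⟨2, ?_, ?_⟩
      · intro i j hij hj2
        interval_cases j
        · omega
        · interval_cases i; exact hf01
        · interval_cases i
          · exact le_trans hf01 hne
          · exact hne
      · intro i j h2i hij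
        rcases Nat.lt_or_ge j 4 with hj | hj
        · have hj3 : j = 3 := by omega
          subst hj3; rw [hf3]; exact Nat.zero_le _
        · rw [hhigh j hj]; exact Nat.zero_le _
    · push_neg at hne
      refine ⟨1, ?_, ?_⟩
      · intro i j hij hj1
        interval_cases j
        · omega
        · interval_cases i; exact hf01
      · intro i j h1i hij
        rcases Nat.lt_or_ge j 4 with hj | hj
        · rcases Nat.lt_or_ge j 3 with hj3 | hj3
          · have : j = 2 := by omega
            subst this
            have : i = 1 := by omega
            subst this
            exact le_of_lt hne
          · have : j = 3 := by omega
            subst this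
            rw [hf3]; exact Nat.zero_le _
        · rw [hhigh j hj]; exact Nat.zero_le _
end

section
/- Let (V,H) be a paving simplicial complex of dimension d ≥ 2. Every flat F of (V,H) with d ≤ |F| < |V| is a maximal long hyperplane, i.e. F contains no facet of (V,H) and every strictly larger proper subset of V containing F contains a facet. -/
variable {α : Type*} [DecidableEq α]

/-- A facet: a maximal face. -/
def IsFacet (H : Set (Finset α)) (B : Finset α) : Prop :=
  B ∈ H ∧ ∀ C ∈ H, B ⊆ C → C = B

/-- In a paving complex of dimension `d ≥ 2`, every flat `F` with
`d ≤ |F| < |V|` is a maximal long hyperplane: `F` contains no facet, and every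
strictly larger proper subset of `V` containing `F` contains a facet. -/
theorem flat_is_maximal_long_hyperplane (V : Finset α) (H : Set (Finset α))
    (d : ℕ) (hd : 2 ≤ d) (hH : IsPav V H d)
    (F : Finset α) (hF : IsFlat V H F) (h1 : d ≤ F.card) (h2 : F.card < V.card) :
    (¬ ∃ B : Finset α, IsFacet H B ∧ B ⊆ F) ∧
      ∀ G : Finset α, F ⊂ G → G ⊆ V → G ≠ V →
        ∃ B : Finset α, IsFacet H B ∧ B ⊆ G := by
  obtain ⟨hcx, hsmall, hbig, hex⟩ := hH
  constructor
  · rintro ⟨B, ⟨hBH, hBmax⟩, hBF⟩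
    obtain ⟨p, hpV, hpF⟩ := Finset.exists_of_ssubset (hF.1.ssubset_of_ne (fun h => absurd (h ▸ h2) (lt_irrefl _)))
    have h := hF.2 B hBH hBF p hpV hpF
    have := hBmax _ h (Finset.subset_insert _ _)
    exact hpF (hBF (this ▸ Finset.mem_insert_self p B))
  · intro G hFG hGV _
    obtain ⟨q, hqG, hqF⟩ := Finset.exists_of_ssubset hFG
    obtain ⟨X, hXF, hXcard⟩ := Finset.exists_subset_card_eq h1
    have hXH : X ∈ H := hsmall X (hXF.trans hF.1) hXcard.le
    have hmem : insert q X ∈ H := hF.2 X hXH hXF q (hGV hqG) hqF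
    have hqX : q ∉ X := fun h => hqF (hXF h)
    have hcard : (insert q X).card = d + 1 := by
      rw [Finset.card_insert_of_notMem hqX, hXcard]
    refine ⟨insert q X, ⟨hmem, fun C hC hsub => ?_⟩, ?_⟩
    · exact (Finset.eq_of_subset_of_card_le hsub (by
        have := hbig C hC; omega)).symm
    · exact Finset.insert_subset hqG (hXF.trans hFG.subset)
end

section
/- Let (V,H) ∈ Pav(d) with d ≥ 2 and suppose (V,H) is pure (all facets have size d+1). Then every maximal long hyperplane L that is not a flat satisfies: there exists another maximal long hyperplane L' ≠ L with |L ∩ L'| ≥ d. -/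
variable {α : Type*} [DecidableEq α]

/-- A long hyperplane: a subset of `V` of size at least `d+1` containing no facet. -/
def LongHyp (V : Finset α) (H : Set (Finset α)) (d : ℕ) (X : Finset α) : Prop :=
  X ⊆ V ∧ d + 1 ≤ X.card ∧ ¬ ∃ B : Finset α, IsFacet H B ∧ B ⊆ X

/-- A maximal long hyperplane. -/
def MaxLongHyp (V : Finset α) (H : Set (Finset α)) (d : ℕ) (X : Finset α) : Prop :=
  LongHyp V H d X ∧ ∀ Y : Finset α, LongHyp V H d Y → X ⊆ Y → Y = X

/-- In a pure paving complex of dimension `d ≥ 2`, every maximal long hyperplane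
`L` which is not a flat meets some other maximal long hyperplane in at least `d`
points. -/
theorem pure_maximal_long_hyperplane_meets (V : Finset α) (H : Set (Finset α))
    (d : ℕ) (hd : 2 ≤ d) (hH : IsPav V H d)
    (hpure : ∀ B : Finset α, IsFacet H B → B.card = d + 1)
    (L : Finset α) (hL : MaxLongHyp V H d L) (hnf : ¬ IsFlat V H L) :
    ∃ L' : Finset α, MaxLongHyp V H d L' ∧ L' ≠ L ∧ d ≤ (L ∩ L').card := by
  classical
  obtain ⟨hcplx, hpav, hbound, -⟩ := hH
  obtain ⟨⟨hLV, hLcard, hLnof⟩, hLmax⟩ := hL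
  -- extract a witness of non-flatness
  simp only [IsFlat, not_and, not_forall] at hnf
  obtain ⟨X, hXH, hXL, p, hpV, hpL, hYnotH⟩ := hnf hLV
  have hpX : p ∉ X := fun h => hpL (hXL h)
  set Y := insert p X with hY
  have hYV : Y ⊆ V := by
    intro x hx
    rcases Finset.mem_insert.mp hx with rfl | hx
    · exact hpV
    · exact hcplx.1 X hXH hx
  -- |X| ≥ d
  have hXd : d ≤ X.card := by
    by_contra h
    push_neg at h
    have : Y.card ≤ d := by
      rw [Finset.card_insert_of_notMem hpX]; omega
    exact hYnotH (hpav Y hYV this)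
  -- |X| ≤ d (else X would be a facet in L)
  have hXd' : X.card ≤ d := by
    by_contra h
    push_neg at h
    have hXcard : X.card = d + 1 := le_antisymm (hbound X hXH) h
    apply hLnof
    refine ⟨X, ⟨hXH, ?_⟩, hXL⟩
    intro C hC hXC
    exact (Finset.eq_of_subset_of_card_le hXC (by rw [hXcard]; exact hbound C hC)).symm
  have hXcard : X.card = d := le_antisymm hXd' hXd
  have hYcard : Y.card = d + 1 := by
    rw [Finset.card_insert_of_notMem hpX, hXcard]
  -- Y is a long hyperplane
  have hYlong : LongHyp V H d Y := by
    refine ⟨hYV, le_of_eq hYcard.symm, ?_⟩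
    rintro ⟨B, hB, hBY⟩
    have hBcard := hpure B hB
    have : B = Y := Finset.eq_of_subset_of_card_le hBY (by omega)
    exact hYnotH (this ▸ hB.1)
  -- extend Y to a maximal long hyperplane via maximal cardinality
  set S : Finset (Finset α) := V.powerset.filter (fun Z => LongHyp V H d Z ∧ Y ⊆ Z)
    with hS
  have hYS : Y ∈ S := by
    simp only [hS, Finset.mem_filter, Finset.mem_powerset]
    exact ⟨hYV, hYlong, le_refl _⟩
  obtain ⟨L', hL'S, hL'max⟩ := S.exists_max_image Finset.card ⟨Y, hYS⟩
  simp only [hS, Finset.mem_filter, Finset.mem_powerset] at hL'S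
  obtain ⟨hL'V, hL'long, hYL'⟩ := hL'S
  refine ⟨L', ⟨hL'long, ?_⟩, ?_, ?_⟩
  · intro Z hZ hL'Z
    have hZS : Z ∈ S := by
      simp only [hS, Finset.mem_filter, Finset.mem_powerset]
      exact ⟨hZ.1, hZ, hYL'.trans hL'Z⟩
    exact (Finset.eq_of_subset_of_card_le hL'Z (hL'max Z hZS)).symm
  · intro h
    exact hpL (h ▸ hYL' (Finset.mem_insert_self p X))
  · calc d = X.card := hXcard.symm
      _ ≤ (L ∩ L').card := Finset.card_le_card (Finset.subset_inter hXL
          (fun x hx => hYL' (Finset.mem_insert_of_mem hx)))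
end

section
/- Let (V,H) ∈ Pav(d) with d ≥ 2. Then Fl(V,H) = P_{≤d−1}(V) ∪ { A ∈ P_d(V) : A ∪ {p} ∈ H for all p ∈ V \ A } ∪ { L : L is a maximal long hyperplane and a flat with |L ∩ L'| ≤ d−1 for every other maximal long hyperplane L' } ∪ {V}. -/
variable {α : Type*} [DecidableEq α]

/-- Description of the flats of a paving complex of dimension `d ≥ 2`:
`Fl(V,H) = P_{≤d−1}(V) ∪ {A ∈ P_d(V) : A ∪ {p} ∈ H for all p ∈ V \ A}
∪ 𝓛^{(1)} ∪ {V}`, where `𝓛^{(1)}` consists of the maximal long hyperplanes which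
are flats and meet every other maximal long hyperplane in at most `d−1` points. -/
theorem flats_of_pav (V : Finset α) (H : Set (Finset α)) (d : ℕ) (hd : 2 ≤ d)
    (hV : V.Nonempty) (hH : IsPav V H d) :
    {F : Finset α | IsFlat V H F} =
      {F : Finset α | F ⊆ V ∧ F.card ≤ d - 1} ∪
        {A : Finset α | A ⊆ V ∧ A.card = d ∧ ∀ p ∈ V, p ∉ A → insert p A ∈ H} ∪
        {L : Finset α | MaxLongHyp V H d L ∧ IsFlat V H L ∧
          ∀ L' : Finset α, MaxLongHyp V H d L' → L' ≠ L → (L ∩ L').card ≤ d - 1} ∪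
        ({V} : Set (Finset α)) := by
  obtain ⟨⟨hsub, hvert, hdown⟩, hlow, hup, hex⟩ := hH
  ext F
  simp only [Set.mem_setOf_eq, Set.mem_union, Set.mem_singleton_iff]
  constructor
  · rintro ⟨hFV, hflat⟩
    by_cases hFeq : F = V
    · right; exact hFeq
    left
    rcases lt_or_ge F.card d with h1 | h1
    · left; left; exact ⟨hFV, by omega⟩
    rcases eq_or_lt_of_le h1 with h2 | h2
    · left; right
      refine ⟨hFV, h2.symm, fun p hp hpF => ?_⟩
      exact hflat F (hlow F hFV (by omega)) (subset_refl F) p hp hpF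
    · right
      have mkfacet : ∀ X : Finset α, X ⊆ F → X.card = d → ∀ p ∈ V, p ∉ F →
          IsFacet H (insert p X) := by
        intro X hXF hXc p hpV hpF
        have hXH : X ∈ H := hlow X (hXF.trans hFV) (le_of_eq hXc)
        have h1 : insert p X ∈ H := hflat X hXH hXF p hpV hpF
        have hpX : p ∉ X := fun h => hpF (hXF h)
        have hc : (insert p X).card = d + 1 := by
          rw [Finset.card_insert_of_notMem hpX, hXc]
        refine ⟨h1, fun C hC hsubC => ?_⟩
        exact (Finset.eq_of_subset_of_card_le hsubC (by have := hup C hC; omega)).symm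
      have hLH : LongHyp V H d F := by
        refine ⟨hFV, by omega, ?_⟩
        rintro ⟨B, hB, hBF⟩
        obtain ⟨p, hpV, hpF⟩ :=
          Finset.not_subset.mp (fun h => hFeq (Finset.Subset.antisymm hFV h))
        have h1 : insert p B ∈ H := hflat B hB.1 hBF p hpV hpF
        have h2 := hB.2 _ h1 (Finset.subset_insert p B)
        exact hpF (hBF (h2 ▸ Finset.mem_insert_self p B))
      have hMax : MaxLongHyp V H d F := by
        refine ⟨hLH, fun Y hY hFY => ?_⟩
        by_contra hne
        obtain ⟨p, hpY, hpF⟩ :=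
          Finset.not_subset.mp (fun h => hne (Finset.Subset.antisymm h hFY))
        obtain ⟨X, hXF, hXc⟩ := Finset.exists_subset_card_eq (s := F) (n := d) (by omega)
        exact hY.2.2 ⟨insert p X, mkfacet X hXF hXc p (hY.1 hpY) hpF,
          Finset.insert_subset hpY (hXF.trans hFY)⟩
      refine ⟨hMax, ⟨hFV, hflat⟩, fun L' hL' hne => ?_⟩
      by_contra hcard
      push_neg at hcard
      obtain ⟨X, hXsub, hXc⟩ := Finset.exists_subset_card_eq (s := F ∩ L') (n := d) (by omega)
      obtain ⟨p, hpL', hpF⟩ : ∃ p ∈ L', p ∉ F :=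
        Finset.not_subset.mp (fun h => hne (hL'.2 F hLH h).symm)
      have hXF : X ⊆ F := hXsub.trans Finset.inter_subset_left
      have fac := mkfacet X hXF hXc p (hL'.1.1 hpL') hpF
      exact hL'.1.2.2 ⟨insert p X, fac,
        Finset.insert_subset hpL' (hXsub.trans Finset.inter_subset_right)⟩
  · rintro (((⟨hFV, hc⟩ | ⟨hAV, hAc, hA⟩) | ⟨_, hflat, _⟩) | hVeq)
    · refine ⟨hFV, fun X hX hXF p hpV hpF => hlow _ ?_ ?_⟩
      · exact Finset.insert_subset hpV ((hXF.trans hFV))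
      · have h1 := Finset.card_le_card hXF
        have h2 := Finset.card_insert_le p X
        omega
    · refine ⟨hAV, fun X hX hXA p hpV hpA => hdown _ (hA p hpV hpA) _ ?_⟩
      exact Finset.insert_subset_insert p hXA
    · exact hflat
    · subst hVeq; exact ⟨subset_refl F, fun X hX hXV p hpV hpF => absurd hpV hpF⟩
end

section
/- Every truncated boolean representable simplicial complex of dimension 1 is boolean representable; equivalently, if (V,H) is a complex of dimension 1 such that every 2-element face {a,c} ∈ H is 'separated' by some T ∈ T(H) with |T ∩ {a,c}| = 1, then the graph on V whose edges are the non-faces {a,b} ∉ H has all connected components cliques. -/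
variable {α : Type*} [DecidableEq α]

/-- For a dimension-1 complex, `T(H)` consists of the `T ⊆ V` such that for every
`x ∈ T` and `p ∈ V \ T`, `{x,p} ∈ H`. -/
def TofH (V : Finset α) (H : Set (Finset α)) : Set (Finset α) :=
  {T : Finset α | T ⊆ V ∧ ∀ x ∈ T, ∀ p ∈ V, p ∉ T → ({x, p} : Finset α) ∈ H}

/-- Every truncated boolean representable complex of dimension 1 is boolean
representable: if every 2-element face `{a,c}` of `(V,H)` is separated by some
`T ∈ T(H)` with `|T ∩ {a,c}| = 1`, then the connected components of the graph on
`V` with edges `P_2(V) \ H` are cliques (vertices in the same component are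
adjacent). -/
theorem tbrsc_dim1_boolean_representable (V : Finset α) (H : Set (Finset α))
    (hV : V.Nonempty) (hH : IsComplex V H) (hdim : ∀ X ∈ H, X.card ≤ 2)
    (hne : ∃ X ∈ H, X.card = 2)
    (hsep : ∀ a ∈ V, ∀ c ∈ V, a ≠ c → ({a, c} : Finset α) ∈ H →
      ∃ T ∈ TofH V H, (a ∈ T ∧ c ∉ T) ∨ (a ∉ T ∧ c ∈ T)) :
    ∀ a b : α,
      Relation.ReflTransGen
        (fun x y => x ∈ V ∧ y ∈ V ∧ x ≠ y ∧ ({x, y} : Finset α) ∉ H) a b →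
      a ≠ b → a ∈ V ∧ b ∈ V ∧ a ≠ b ∧ ({a, b} : Finset α) ∉ H := by
  intro a b hab
  induction hab with
  | refl => intro h; exact absurd rfl h
  | @tail b c hab hbc ih =>
    intro hac
    obtain ⟨hbV, hcV, hbc', hbcH⟩ := hbc
    by_cases hab' : a = b
    · subst hab'; exact ⟨hbV, hcV, hac, hbcH⟩
    · obtain ⟨haV, _, _, habH⟩ := ih hab'
      refine ⟨haV, hcV, hac, fun hacH => ?_⟩
      obtain ⟨T, ⟨hTV, hT⟩, hcase⟩ := hsep a haV c hcV hac hacH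
      rcases hcase with ⟨haT, hcT⟩ | ⟨haT, hcT⟩
      · by_cases hbT : b ∈ T
        · exact hbcH (hT b hbT c hcV hcT)
        · exact habH (hT a haT b hbV hbT)
      · by_cases hbT : b ∈ T
        · exact habH (by rw [Finset.pair_comm]; exact hT b hbT a haV haT)
        · exact hbcH (by rw [Finset.pair_comm]; exact hT c hcT b hbV hbT)
end

section
/- Let d ≥ 2 and let L ⊆ V with d ≤ |L| < |V| − 1. Then the flats of the complex (V, B_d(V,L)) are exactly P_{≤d−1}(V) ∪ {L, V}. If |L| = |V| − 1, the flats are P_{≤d−1}(V) ∪ {L, V} ∪ (P_d(V) \ P_d(L)). -/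
variable {α : Type*} [DecidableEq α]

/-- `B_d(V,L) = P_{≤d}(V) ∪ { X ∈ P_{d+1}(V) : |X ∩ L| = d }`. -/
def Bd (V : Finset α) (d : ℕ) (L : Finset α) : Set (Finset α) :=
  {X : Finset α | X ⊆ V ∧ (X.card ≤ d ∨ (X.card = d + 1 ∧ (X ∩ L).card = d))}

open Finset

lemma flat_small {V L F : Finset α} {d : ℕ} (hF : F ⊆ V) (h : F.card < d) :
    IsFlat V (Bd V d L) F := by
  refine ⟨hF, fun X hX hXF p hp hpF => ?_⟩
  have h1 : X.card ≤ F.card := card_le_card hXF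
  have h2 : (insert p X).card ≤ X.card + 1 := card_insert_le p X
  exact ⟨insert_subset hp (hXF.trans hF), Or.inl (by omega)⟩

lemma flat_V {V L : Finset α} {d : ℕ} : IsFlat V (Bd V d L) V :=
  ⟨subset_rfl, fun X _ _ p hp hpF => absurd hp hpF⟩

lemma flat_L {V L : Finset α} {d : ℕ} (hLV : L ⊆ V) : IsFlat V (Bd V d L) L := by
  refine ⟨hLV, fun X hX hXF p hp hpF => ?_⟩
  have hpX : p ∉ X := fun h => hpF (hXF h)
  have hcard : (insert p X).card = X.card + 1 := card_insert_of_notMem hpX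
  have hXL : X ∩ L = X := inter_eq_left.mpr hXF
  refine ⟨insert_subset hp (hXF.trans hLV), ?_⟩
  rcases hX.2 with h | h
  · rcases lt_or_eq_of_le h with h' | h'
    · exact Or.inl (by omega)
    · refine Or.inr ⟨by omega, ?_⟩
      rw [insert_inter_of_notMem hpF, hXL, h']
  · exfalso; rw [hXL] at h; omega

lemma flat_special {V L F : Finset α} {d : ℕ} (hLV : L ⊆ V)
    (hcd : L.card + 1 = V.card) (hF : F ⊆ V) (hFd : F.card = d) (hns : ¬ F ⊆ L) :
    IsFlat V (Bd V d L) F := by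
  refine ⟨hF, fun X hX hXF p hp hpF => ?_⟩
  have hXV : X ⊆ V := hXF.trans hF
  have hX1 : X.card ≤ F.card := card_le_card hXF
  rcases lt_or_eq_of_le hX1 with h | h
  · have h2 : (insert p X).card ≤ X.card + 1 := card_insert_le p X
    exact ⟨insert_subset hp hXV, Or.inl (by omega)⟩
  · -- X = F
    have hXF' : X = F := eq_of_subset_of_card_le hXF (le_of_eq h.symm)
    subst hXF'
    have hVL : (V \ L).card = 1 := by
      rw [card_sdiff_of_subset hLV]; omega
    -- F \ L = V \ L
    have hsub : X \ L ⊆ V \ L := sdiff_subset_sdiff hF subset_rfl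
    obtain ⟨z, hzF, hzL⟩ := not_subset.mp hns
    have hz : z ∈ X \ L := mem_sdiff.mpr ⟨hzF, hzL⟩
    have hone : 1 ≤ (X \ L).card := card_pos.mpr ⟨z, hz⟩
    have heq : X \ L = V \ L := eq_of_subset_of_card_le hsub (by omega)
    have hpL : p ∈ L := by
      by_contra hpl
      have : p ∈ X \ L := heq ▸ mem_sdiff.mpr ⟨hp, hpl⟩
      exact hpF (mem_sdiff.mp this).1
    have hpX : p ∉ X := hpF
    refine ⟨insert_subset hp hXV, Or.inr ⟨by rw [card_insert_of_notMem hpX]; omega, ?_⟩⟩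
    rw [insert_inter_of_mem hpL, card_insert_of_notMem (fun h => hpX (mem_inter.mp h).1)]
    have := card_inter_add_card_sdiff X L
    rw [heq] at this
    omega

/-- Any flat other than `V` and `L` has cardinality at most `d`. -/
lemma flat_card_le {V L F : Finset α} {d : ℕ} (hd : 2 ≤ d) (hLV : L ⊆ V)
    (hdL : d ≤ L.card) (hF : IsFlat V (Bd V d L) F) :
    F = V ∨ F = L ∨ F.card ≤ d := by
  by_contra hcon
  push_neg at hcon
  obtain ⟨hneV, hneL, hcard⟩ := hcon
  have hcard : d + 1 ≤ F.card := hcard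
  have hFV : F ⊆ V := hF.1
  obtain ⟨p, hpV, hpF⟩ := exists_of_ssubset (Finset.ssubset_iff_subset_ne.mpr ⟨hFV, hneV⟩)
  -- key consequence builder
  have key : ∀ X ⊆ F, X.card = d → ∀ q ∈ V, q ∉ F → ((insert q X) ∩ L).card = d := by
    intro X hXF hXd q hqV hqF
    have hmem : X ∈ Bd V d L := ⟨hXF.trans hFV, Or.inl (le_of_eq hXd)⟩
    obtain ⟨hsub, hc⟩ := hF.2 X hmem hXF q hqV hqF
    have hqX : q ∉ X := fun h => hqF (hXF h)
    have : (insert q X).card = d + 1 := by rw [card_insert_of_notMem hqX]; omega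
    rcases hc with h | h
    · omega
    · exact h.2
  by_cases h2 : 2 ≤ (F \ L).card
  · -- two elements outside L
    obtain ⟨T, hTsub, hT2⟩ := exists_subset_card_eq h2
    have hTF : T ⊆ F := hTsub.trans sdiff_subset
    obtain ⟨Y, hYsub, hYc⟩ := exists_subset_card_eq (show d - 2 ≤ (F \ T).card by
      rw [card_sdiff_of_subset hTF]; omega)
    have hXF : T ∪ Y ⊆ F := union_subset hTF (hYsub.trans sdiff_subset)
    have hdisj : Disjoint T Y := disjoint_left.mpr
      (fun a haT haY => (mem_sdiff.mp (hYsub haY)).2 haT)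
    have hXc : (T ∪ Y).card = d := by rw [card_union_of_disjoint hdisj]; omega
    have hK := key (T ∪ Y) hXF hXc p hpV hpF
    -- but (insert p (T∪Y)) ∩ L ⊆ insert p (T∪Y) \ T
    have hsub2 : (insert p (T ∪ Y)) ∩ L ⊆ insert p (T ∪ Y) \ T := by
      intro a ha
      obtain ⟨ha1, ha2⟩ := mem_inter.mp ha
      refine mem_sdiff.mpr ⟨ha1, fun haT => (mem_sdiff.mp (hTsub haT)).2 ha2⟩
    have hpX : p ∉ T ∪ Y := fun h => hpF (hXF h)
    have hTi : T ⊆ insert p (T ∪ Y) := fun a ha => mem_insert_of_mem (mem_union_left _ ha)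
    have hc2 : (insert p (T ∪ Y) \ T).card = d - 1 := by
      rw [card_sdiff_of_subset hTi, card_insert_of_notMem hpX]; omega
    have := card_le_card hsub2
    omega
  · -- at most one element outside L
    have hinter : d ≤ (F ∩ L).card := by
      have := card_inter_add_card_sdiff F L
      omega
    -- every q ∈ V \ F is outside L
    have stepA : ∀ q ∈ V, q ∉ F → q ∉ L := by
      intro q hqV hqF hqL
      obtain ⟨X, hXsub, hXc⟩ := exists_subset_card_eq hinter
      have hXL : X ⊆ L := hXsub.trans inter_subset_right
      have hK := key X (hXsub.trans inter_subset_left) hXc q hqV hqF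
      have hqX : q ∉ X := fun h => hqF ((hXsub.trans inter_subset_left) h)
      rw [insert_inter_of_mem hqL, inter_eq_left.mpr hXL,
        card_insert_of_notMem hqX] at hK
      omega
    have hLF : L ⊆ F := fun x hxL => by
      by_contra hxF
      exact stepA x (hLV hxL) hxF hxL
    have : F \ L ≠ ∅ := by
      intro h
      exact hneL (subset_antisymm (fun a ha => by
        by_contra hal
        exact (notMem_empty a) (h ▸ mem_sdiff.mpr ⟨ha, hal⟩)) hLF)
    obtain ⟨z, hz⟩ := nonempty_iff_ne_empty.mpr this
    obtain ⟨hzF, hzL⟩ := mem_sdiff.mp hz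
    obtain ⟨Y, hYL, hYc⟩ := exists_subset_card_eq (show d - 1 ≤ L.card by omega)
    have hzY : z ∉ Y := fun h => hzL (hYL h)
    have hXF : insert z Y ⊆ F := insert_subset hzF (hYL.trans hLF)
    have hXc : (insert z Y).card = d := by rw [card_insert_of_notMem hzY]; omega
    have hK := key (insert z Y) hXF hXc p hpV hpF
    have hpL : p ∉ L := stepA p hpV hpF
    rw [insert_inter_of_notMem hpL, insert_inter_of_notMem hzL,
      inter_eq_left.mpr hYL] at hK
    omega

/-- A flat of cardinality `d`, other than `L`, is not contained in `L` and forces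
`|L| + 1 = |V|`. -/
lemma flat_card_eq {V L F : Finset α} {d : ℕ} (hd : 2 ≤ d) (hLV : L ⊆ V)
    (hdL : d ≤ L.card) (hLlt : L.card < V.card) (hF : IsFlat V (Bd V d L) F)
    (hFd : F.card = d) (hneL : F ≠ L) : ¬ F ⊆ L ∧ L.card + 1 = V.card := by
  have hFV : F ⊆ V := hF.1
  have key : ∀ q ∈ V, q ∉ F → ((insert q F) ∩ L).card = d := by
    intro q hqV hqF
    have hmem : F ∈ Bd V d L := ⟨hFV, Or.inl (le_of_eq hFd)⟩
    obtain ⟨hsub, hc⟩ := hF.2 F hmem subset_rfl q hqV hqF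
    have : (insert q F).card = d + 1 := by rw [card_insert_of_notMem hqF]; omega
    rcases hc with h | h
    · omega
    · exact h.2
  have hns : ¬ F ⊆ L := by
    intro hFL
    have hss : F ⊂ L := Finset.ssubset_iff_subset_ne.mpr ⟨hFL, hneL⟩
    obtain ⟨q, hqL, hqF⟩ := exists_of_ssubset hss
    have hK := key q (hLV hqL) hqF
    rw [insert_inter_of_mem hqL, inter_eq_left.mpr hFL,
      card_insert_of_notMem hqF] at hK
    omega
  refine ⟨hns, ?_⟩
  -- F \ L has card exactly 1
  obtain ⟨z, hzF, hzL⟩ := not_subset.mp hns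
  have hFne : F ≠ V := fun h => by subst h; omega
  obtain ⟨p, hpV, hpF⟩ := exists_of_ssubset (Finset.ssubset_iff_subset_ne.mpr ⟨hFV, hFne⟩)
  have hFL1 : (F \ L).card = 1 := by
    have hge : 1 ≤ (F \ L).card := card_pos.mpr ⟨z, mem_sdiff.mpr ⟨hzF, hzL⟩⟩
    by_contra hne
    have h2 : 2 ≤ (F \ L).card := by omega
    have hK := key p hpV hpF
    have hsub2 : (insert p F) ∩ L ⊆ insert p (F ∩ L) := by
      intro a ha
      obtain ⟨ha1, ha2⟩ := mem_inter.mp ha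
      rcases mem_insert.mp ha1 with h | h
      · exact h ▸ mem_insert_self _ _
      · exact mem_insert_of_mem (mem_inter.mpr ⟨h, ha2⟩)
    have hub := card_le_card hsub2
    have hle : (insert p (F ∩ L)).card ≤ (F ∩ L).card + 1 := card_insert_le _ _
    have := card_inter_add_card_sdiff F L
    omega
  -- every q ∈ V \ F is in L
  have stepB : ∀ q ∈ V, q ∉ F → q ∈ L := by
    intro q hqV hqF
    by_contra hqL
    have hK := key q hqV hqF
    rw [insert_inter_of_notMem hqL] at hK
    have := card_inter_add_card_sdiff F L
    omega
  have hVL : V \ L ⊆ F \ L := by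
    intro x hx
    obtain ⟨hxV, hxL⟩ := mem_sdiff.mp hx
    have hxF : x ∈ F := by
      by_contra hxF
      exact hxL (stepB x hxV hxF)
    exact mem_sdiff.mpr ⟨hxF, hxL⟩
  have := card_le_card hVL
  have := card_sdiff_of_subset hLV
  omega

/-- The flats of `(V, B_d(V,L))`: if `|L| < |V| − 1` they are exactly
`P_{≤d−1}(V) ∪ {L, V}`; if `|L| = |V| − 1` they are
`P_{≤d−1}(V) ∪ {L, V} ∪ (P_d(V) \ P_d(L))`. -/
theorem flats_of_Bd (V : Finset α) (d : ℕ) (hd : 2 ≤ d) (L : Finset α)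
    (hLV : L ⊆ V) (hdL : d ≤ L.card) (hLlt : L.card < V.card) :
    (L.card + 1 < V.card →
      {F : Finset α | IsFlat V (Bd V d L) F} =
        {F : Finset α | F ⊆ V ∧ F.card ≤ d - 1} ∪ ({L, V} : Set (Finset α))) ∧
    (L.card + 1 = V.card →
      {F : Finset α | IsFlat V (Bd V d L) F} =
        {F : Finset α | F ⊆ V ∧ F.card ≤ d - 1} ∪ ({L, V} : Set (Finset α)) ∪
          {F : Finset α | F ⊆ V ∧ F.card = d ∧ ¬ F ⊆ L}) := by
  constructor
  · intro hlt
    ext F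
    simp only [Set.mem_setOf_eq, Set.mem_union, Set.mem_insert_iff, Set.mem_singleton_iff]
    constructor
    · intro hF
      rcases flat_card_le hd hLV hdL hF with hV | hL | hle
      · exact Or.inr (Or.inr hV)
      · exact Or.inr (Or.inl hL)
      · rcases lt_or_eq_of_le hle with hlt' | heq'
        · exact Or.inl ⟨hF.1, by omega⟩
        · by_cases hFL : F = L
          · exact Or.inr (Or.inl hFL)
          · have := (flat_card_eq hd hLV hdL hLlt hF heq' hFL).2
            omega
    · rintro (⟨h1, h2⟩ | h | h)
      · exact flat_small h1 (by omega)
      · subst h; exact flat_L hLV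
      · subst h; exact flat_V
  · intro heq
    ext F
    simp only [Set.mem_setOf_eq, Set.mem_union, Set.mem_insert_iff, Set.mem_singleton_iff]
    constructor
    · intro hF
      rcases flat_card_le hd hLV hdL hF with hV | hL | hle
      · exact Or.inl (Or.inr (Or.inr hV))
      · exact Or.inl (Or.inr (Or.inl hL))
      · rcases lt_or_eq_of_le hle with hlt' | heq'
        · exact Or.inl (Or.inl ⟨hF.1, by omega⟩)
        · by_cases hFL : F = L
          · exact Or.inl (Or.inr (Or.inl hFL))
          · exact Or.inr ⟨hF.1, heq', (flat_card_eq hd hLV hdL hLlt hF heq' hFL).1⟩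
    · rintro ((⟨h1, h2⟩ | h | h) | ⟨h1, h2, h3⟩)
      · exact flat_small h1 (by omega)
      · subst h; exact flat_L hLV
      · subst h; exact flat_V
      · exact flat_special hLV heq h1 h2 h3
end

section
/- Let d ≥ 2 and let 𝓛 be a nonempty family of subsets of V with d ≤ |L| < |V| for all L ∈ 𝓛, such that |L ∩ L'| ≤ d − 1 for all distinct L, L' ∈ 𝓛. Then every L ∈ 𝓛 is a flat of the complex (V, ∪_{L∈𝓛} B_d(V,L)). -/
variable {α : Type*} [DecidableEq α]

/-- If `𝓛` is a nonempty family of proper subsets of `V` of size at least `d`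
with pairwise intersections of size at most `d−1`, then every `L ∈ 𝓛` is a flat
of the complex `(V, ⋃_{L ∈ 𝓛} B_d(V,L))`. -/
theorem mem_family_isFlat_of_union_Bd (V : Finset α) (d : ℕ) (hd : 2 ≤ d)
    (𝓛 : Set (Finset α)) (h𝓛 : 𝓛.Nonempty)
    (hmem : ∀ L ∈ 𝓛, L ⊆ V ∧ d ≤ L.card ∧ L.card < V.card)
    (hint : ∀ L ∈ 𝓛, ∀ L' ∈ 𝓛, L ≠ L' → (L ∩ L').card ≤ d - 1) :
    ∀ L ∈ 𝓛, IsFlat V {X : Finset α | ∃ L' ∈ 𝓛, X ∈ Bd V d L'} L := by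
  intro L hL
  obtain ⟨hLV, hdL, hLVc⟩ := hmem L hL
  refine ⟨hLV, ?_⟩
  rintro X ⟨L', hL', hXV, hX⟩ hXL p hpV hpL
  rcases hX with hXd | ⟨hc, hcap⟩
  · refine ⟨L, hL, Finset.insert_subset hpV (hXL.trans hLV), ?_⟩
    by_cases hpX : p ∈ X
    · left; rwa [Finset.insert_eq_self.mpr hpX]
    · rw [Finset.card_insert_of_notMem hpX]
      rcases lt_or_eq_of_le hXd with h | h
      · left; omega
      · right
        refine ⟨by omega, ?_⟩
        have : insert p X ∩ L = X := by
          ext a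
          simp only [Finset.mem_inter, Finset.mem_insert]
          constructor
          · rintro ⟨(rfl | ha), haL⟩
            · exact absurd haL hpL
            · exact ha
          · intro ha; exact ⟨Or.inr ha, hXL ha⟩
        rw [this, h]
  · exfalso
    by_cases h : L' = L
    · subst h
      have : X ∩ L' = X := Finset.inter_eq_left.mpr hXL
      rw [this] at hcap; omega
    · have hsub : X ∩ L' ⊆ L ∩ L' := Finset.inter_subset_inter hXL (le_refl _)
      have h1 := Finset.card_le_card hsub
      have h2 := hint L hL L' hL' (Ne.symm h)
      omega
end

section
/- A simplicial complex (V,H) is a matroid if and only if for all X, Y ∈ H, equality of closures cl(X) = cl(Y) (in the lattice of flats) implies |X| = |Y|. -/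
open Classical

variable {α : Type*} [DecidableEq α]

section Aux

variable {V : Finset α} {H : Set (Finset α)}

lemma inCl_self {X : Finset α} {x : α} (hx : x ∈ X) : inCl V H X x :=
  fun _ _ hXF => hXF hx

/-- If adding `z` to a face `Y` gives a dependent set, then `z ∈ cl(Y)`. -/
lemma inCl_of_dep (hY : Y ∈ H) {z : α} (hzV : z ∈ V) (hdep : insert z Y ∉ H) :
    inCl V H Y z := by
  intro F hF hYF
  by_contra hzF
  exact hdep (hF.2 Y hY hYF z hzV hzF)

/-- Existence of a maximal face between `I` and `S`. -/
lemma exists_maximal_face (hH : IsComplex V H) {I S : Finset α}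
    (hI : I ∈ H) (hIS : I ⊆ S) (hSV : S ⊆ V) :
    ∃ B ∈ H, I ⊆ B ∧ B ⊆ S ∧ ∀ z ∈ S, z ∉ B → insert z B ∉ H := by
  set T : Set (Finset α) := {B | B ∈ H ∧ I ⊆ B ∧ B ⊆ S} with hT
  have hfin : T.Finite := by
    apply Set.Finite.subset (S.powerset : Finset (Finset α)).finite_toSet
    intro B hB
    simpa using hB.2.2
  obtain ⟨B, hBT, hmax⟩ := Set.Finite.exists_maximalFor Finset.card T hfin ⟨I, hI, le_refl I, hIS⟩
  refine ⟨B, hBT.1, hBT.2.1, hBT.2.2, ?_⟩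
  intro z hzS hzB hins
  have hT' : insert z B ∈ T :=
    ⟨hins, hBT.2.1.trans (Finset.subset_insert _ _), Finset.insert_subset hzS hBT.2.2⟩
  have := hmax hT' (by simp [Finset.card_insert_of_notMem hzB])
  simp [Finset.card_insert_of_notMem hzB] at this

/-- Cardinality bound: a face inside the span of another face is no bigger. -/
lemma card_le_of_subset_span (hH : IsComplex V H) (hEx : HasExchange H)
    {A B : Finset α} (hA : A ∈ H) (hB : B ∈ H)
    (hspan : ∀ a ∈ A, a ∈ B ∨ insert a B ∉ H) : A.card ≤ B.card := by
  by_contra hlt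
  push_neg at hlt
  obtain ⟨A', hA'A, hA'card⟩ := Finset.exists_subset_card_eq (n := B.card + 1) hlt
  have hA' : A' ∈ H := hH.2.2 A hA A' hA'A
  obtain ⟨i, hiA', hiB, hins⟩ := hEx A' hA' B hB hA'card
  rcases hspan i (hA'A hiA') with h | h
  · exact hiB h
  · exact h hins

/-- Under exchange, elements of the closure of a face `Y` lie in its span. -/
lemma span_of_inCl (hH : IsComplex V H) (hEx : HasExchange H)
    {Y : Finset α} (hY : Y ∈ H) {x : α} (hx : inCl V H Y x) :
    x ∈ Y ∨ insert x Y ∉ H := by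
  classical
  set F : Finset α := V.filter (fun z => z ∈ Y ∨ insert z Y ∉ H) with hFdef
  have hYV : Y ⊆ V := hH.1 Y hY
  have hYF : Y ⊆ F := by
    intro y hy
    exact Finset.mem_filter.2 ⟨hYV hy, Or.inl hy⟩
  have hFflat : IsFlat V H F := by
    refine ⟨Finset.filter_subset _ _, ?_⟩
    intro W hW hWF p hpV hpF
    have hp : p ∉ Y ∧ insert p Y ∈ H := by
      rw [hFdef, Finset.mem_filter] at hpF
      push_neg at hpF
      have := hpF hpV
      exact this
    -- a maximal face B with W ⊆ B ⊆ W ∪ Y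
    have hWV : W ⊆ V := hH.1 W hW
    obtain ⟨B, hB, hWB, hBWY, hBmax⟩ := exists_maximal_face hH hW
      (Finset.subset_union_left (s₂ := Y)) (Finset.union_subset hWV hYV)
    -- Y is in the span of B
    have hYspanB : ∀ y ∈ Y, y ∈ B ∨ insert y B ∉ H := by
      intro y hy
      by_cases hyB : y ∈ B
      · exact Or.inl hyB
      · exact Or.inr (hBmax y (Finset.mem_union_right _ hy) hyB)
    -- B is in the span of Y
    have hBspanY : ∀ b ∈ B, b ∈ Y ∨ insert b Y ∉ H := by
      intro b hb
      rcases Finset.mem_union.1 (hBWY hb) with hbW | hbY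
      · have := Finset.mem_filter.1 (hWF hbW)
        exact this.2
      · exact Or.inl hbY
    have hcard : B.card = Y.card :=
      le_antisymm (card_le_of_subset_span hH hEx hB hY hBspanY)
        (card_le_of_subset_span hH hEx hY hB hYspanB)
    -- exchange from insert p Y into B
    have hpB : p ∉ B := by
      intro hpB
      rcases Finset.mem_union.1 (hBWY hpB) with hW' | hY'
      · exact hpF (hWF hW')
      · exact hp.1 hY'
    obtain ⟨i, hi, hiB, hins⟩ := hEx (insert p Y) hp.2 B hB
      (by rw [Finset.card_insert_of_notMem hp.1, hcard])
    have hip : i = p := by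
      rcases Finset.mem_insert.1 hi with h | h
      · exact h
      · rcases hYspanB i h with h' | h'
        · exact absurd h' hiB
        · exact absurd hins h'
    subst hip
    exact hH.2.2 _ hins (insert i W) (Finset.insert_subset_insert _ hWB)
  rcases Finset.mem_filter.1 (hx F hFflat hYF) with ⟨_, h⟩
  exact h

/-- The closure of a face is a flat (no exchange needed). -/
lemma cl_isFlat (hH : IsComplex V H) {J : Finset α} :
    IsFlat V H (V.filter (inCl V H J)) := by
  classical
  refine ⟨Finset.filter_subset _ _, ?_⟩
  intro X hX hXcl p hpV hpcl
  have hp : ¬ inCl V H J p := by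
    intro h
    exact hpcl (Finset.mem_filter.2 ⟨hpV, h⟩)
  rw [inCl] at hp
  push_neg at hp
  obtain ⟨F, hF, hJF, hpF⟩ := hp
  have hXF : X ⊆ F := by
    intro x hx
    exact (Finset.mem_filter.1 (hXcl hx)).2 F hF hJF
  exact hF.2 X hX hXF p hpV hpF

end Aux

/-- A simplicial complex is a matroid if and only if for all faces `X, Y`,
`cl(X) = cl(Y)` implies `|X| = |Y|`. -/
theorem matroid_iff_closure_card (V : Finset α) (H : Set (Finset α))
    (hV : V.Nonempty) (hH : IsComplex V H) :
    HasExchange H ↔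
      ∀ X ∈ H, ∀ Y ∈ H,
        (∀ z : α, inCl V H X z ↔ inCl V H Y z) → X.card = Y.card := by
  constructor
  · intro hEx X hX Y hY hcl
    have key : ∀ A ∈ H, ∀ B ∈ H, (∀ z : α, inCl V H A z → inCl V H B z) →
        A.card ≤ B.card := by
      intro A hA B hB h
      refine card_le_of_subset_span hH hEx hA hB ?_
      intro a ha
      exact span_of_inCl hH hEx hB (h a (inCl_self ha))
    exact le_antisymm (key X hX Y hY fun z => (hcl z).1)
      (key Y hY X hX fun z => (hcl z).2)
  · intro hcard
    intro I hI J hJ hIJ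
    by_contra hno
    push_neg at hno
    -- every element of I lies in cl(J)
    have hIcl : ∀ i ∈ I, inCl V H J i := by
      intro i hi
      by_cases hiJ : i ∈ J
      · exact inCl_self hiJ
      · exact inCl_of_dep hJ (hH.1 I hI hi) (hno i hi hiJ)
    classical
    set clJ : Finset α := V.filter (inCl V H J) with hclJ
    have hJcl : J ⊆ clJ := by
      intro j hj
      exact Finset.mem_filter.2 ⟨hH.1 J hJ hj, inCl_self hj⟩
    have hIclJ : I ⊆ clJ := by
      intro i hi
      exact Finset.mem_filter.2 ⟨hH.1 I hI hi, hIcl i hi⟩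
    obtain ⟨I', hI', hII', hI'cl, hmax⟩ :=
      exists_maximal_face hH hI hIclJ (Finset.filter_subset _ _)
    -- cl(I') = cl(J)
    have hJclI' : ∀ j ∈ J, inCl V H I' j := by
      intro j hj
      by_cases hjI' : j ∈ I'
      · exact inCl_self hjI'
      · exact inCl_of_dep hI' (hH.1 J hJ hj) (hmax j (hJcl hj) hjI')
    have heq : ∀ z : α, inCl V H I' z ↔ inCl V H J z := by
      intro z
      constructor
      · intro hz F hF hJF
        have hclJF : clJ ⊆ F := by
          intro w hw
          exact (Finset.mem_filter.1 hw).2 F hF hJF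
        exact hz F hF (hI'cl.trans hclJF)
      · intro hz F hF hI'F
        have hJF : J ⊆ F := fun j hj => hJclI' j hj F hF hI'F
        exact hz F hF hJF
    have := hcard I' hI' J hJ heq
    have hle : I.card ≤ I'.card := Finset.card_le_card hII'
    omega
end

section
/- Every paving boolean representable complex of dimension d is a near-matroid: if (V,H) ∈ BPav(d) and X, Y ∈ H satisfy cl(X) = cl(Y) ⊊ V, then |X| = |Y|. -/
variable {α : Type*} [DecidableEq α]

/-- Every paving boolean representable complex of dimension `d` is a
near-matroid: if faces `X, Y` have equal closures and this common closure is a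
proper subset of `V`, then `|X| = |Y|`. Boolean representability is imposed via
the standard criterion. -/
theorem bpav_near_matroid (V : Finset α) (H : Set (Finset α)) (hV : V.Nonempty)
    (d : ℕ) (hH : IsPav V H d)
    (hbr : ∀ X ∈ H, X.Nonempty → ∃ x ∈ X, ¬ inCl V H (X.erase x) x)
    (X : Finset α) (hX : X ∈ H) (Y : Finset α) (hY : Y ∈ H)
    (hcl : ∀ z : α, inCl V H X z ↔ inCl V H Y z)
    (hproper : ∃ v ∈ V, ¬ inCl V H X v) :
    X.card = Y.card := by
  obtain ⟨⟨hsub, hsing, hdown⟩, hpav, hbound, hfacet⟩ := hH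
  have facetCl : ∀ Z ∈ H, Z.card = d + 1 → ∀ z ∈ V, inCl V H Z z := by
    intro Z hZ hcard z hz F hF hZF
    have hVF : V ⊆ F := by
      intro p hp
      by_contra hpF
      have h1 : insert p Z ∈ H := hF.2 Z hZ hZF p hp hpF
      have hpZ : p ∉ Z := fun h => hpF (hZF h)
      have := hbound _ h1
      rw [Finset.card_insert_of_notMem hpZ, hcard] at this
      omega
    exact hVF hz
  obtain ⟨v, hvV, hvX⟩ := hproper
  have hXd : X.card ≤ d := by
    rcases Nat.lt_or_ge X.card (d + 1) with h | h
    · omega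
    · have hc : X.card = d + 1 := le_antisymm (hbound X hX) h
      exact absurd (facetCl X hX hc v hvV) hvX
  have hvY : ¬ inCl V H Y v := fun h => hvX ((hcl v).mpr h)
  have hYd : Y.card ≤ d := by
    rcases Nat.lt_or_ge Y.card (d + 1) with h | h
    · omega
    · have hc : Y.card = d + 1 := le_antisymm (hbound Y hY) h
      exact absurd (facetCl Y hY hc v hvV) hvY
  have flatSmall : ∀ Z : Finset α, Z ⊆ V → Z.card < d → IsFlat V H Z := by
    intro Z hZV hZd
    refine ⟨hZV, fun W hW hWZ p hp hpZ => ?_⟩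
    apply hpav
    · intro x hx
      rcases Finset.mem_insert.1 hx with rfl | hx
      · exact hp
      · exact hZV (hWZ hx)
    · have h1 : W.card ≤ Z.card := Finset.card_le_card hWZ
      calc (insert p W).card ≤ W.card + 1 := Finset.card_insert_le _ _
        _ ≤ d := by omega
  have subCl : ∀ Z : Finset α, Z ⊆ V → Z.card < d → ∀ z, inCl V H Z z → z ∈ Z :=
    fun Z hZV hZd z hz => hz Z (flatSmall Z hZV hZd) (le_refl _)
  have memCl : ∀ Z : Finset α, ∀ z ∈ Z, inCl V H Z z := fun Z z hz F hF hZF => hZF hz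
  rcases Nat.lt_or_ge X.card d with hx | hx
  · have hYX : Y ⊆ X := fun y hy => subCl X (hsub X hX) hx y ((hcl y).mpr (memCl Y y hy))
    rcases Nat.lt_or_ge Y.card d with hy | hy
    · have hXY : X ⊆ Y := fun x hxm => subCl Y (hsub Y hY) hy x ((hcl x).mp (memCl X x hxm))
      exact congrArg Finset.card (Finset.Subset.antisymm hXY hYX)
    · have := Finset.card_le_card hYX; omega
  · rcases Nat.lt_or_ge Y.card d with hy | hy
    · have hXY : X ⊆ Y := fun x hxm => subCl Y (hsub Y hY) hy x ((hcl x).mp (memCl X x hxm))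
      have := Finset.card_le_card hXY; omega
    · omega
end

section
/- Let (V,H) be a paving complex of dimension 1 (i.e. a graph with all singletons as faces and at least one edge). Then (V,H) goes up — i.e. T(H) contains a chain T₀ ⊂ T₁ ⊂ T₂ ⊂ T₃ — if and only if the defect graph Def(V,H), whose edges are the pairs in P_2(V) \ H, has more than two connected components. Moreover T(H) consists exactly of the unions of connected components of Def(V,H). -/
variable {α : Type*} [DecidableEq α]

/-- Adjacency in the defect graph `Def(V,H)`: edges are pairs of `P_2(V) \ H`. -/
def DefAdj (V : Finset α) (H : Set (Finset α)) (x y : α) : Prop :=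
  x ∈ V ∧ y ∈ V ∧ x ≠ y ∧ ({x, y} : Finset α) ∉ H

/-- For a paving complex of dimension 1: `T(H)` consists exactly of the unions of
connected components of the defect graph, and `(V,H)` goes up (there is a chain
`T₀ ⊂ T₁ ⊂ T₂ ⊂ T₃` in `T(H)`) if and only if the defect graph has more than two
connected components (three pairwise non-connected vertices exist). -/
theorem goes_up_iff_defect_components (V : Finset α) (H : Set (Finset α))
    (hV : V.Nonempty) (hH : IsPav V H 1) :
    (∀ T : Finset α, T ∈ TofH V H ↔
        (T ⊆ V ∧ ∀ x ∈ T, ∀ y : α, DefAdj V H x y → y ∈ T)) ∧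
    ((∃ T₀ T₁ T₂ T₃ : Finset α, T₀ ∈ TofH V H ∧ T₁ ∈ TofH V H ∧
        T₂ ∈ TofH V H ∧ T₃ ∈ TofH V H ∧ T₀ ⊂ T₁ ∧ T₁ ⊂ T₂ ∧ T₂ ⊂ T₃) ↔
      ∃ a b c : α, a ∈ V ∧ b ∈ V ∧ c ∈ V ∧
        ¬ Relation.ReflTransGen (DefAdj V H) a b ∧
        ¬ Relation.ReflTransGen (DefAdj V H) b c ∧
        ¬ Relation.ReflTransGen (DefAdj V H) a c) := by
  classical
  have closed : ∀ T ∈ TofH V H, ∀ x ∈ T, ∀ y, Relation.ReflTransGen (DefAdj V H) x y → y ∈ T := by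
    rintro T ⟨hTV, hT⟩ x hx y hxy
    induction hxy with
    | refl => exact hx
    | tail _ h ih =>
      by_contra hzT
      exact h.2.2.2 (hT _ ih _ h.2.1 hzT)
  constructor
  · intro T
    constructor
    · rintro ⟨hTV, hT⟩
      refine ⟨hTV, fun x hx y hadj => ?_⟩
      by_contra hyT
      exact hadj.2.2.2 (hT x hx y hadj.2.1 hyT)
    · rintro ⟨hTV, hT⟩
      refine ⟨hTV, fun x hx p hpV hpT => ?_⟩
      by_contra hne
      exact hpT (hT x hx p ⟨hTV hx, hpV, fun h => hpT (h ▸ hx), hne⟩)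
  · constructor
    · rintro ⟨T₀, T₁, T₂, T₃, h₀, h₁, h₂, h₃, s₀₁, s₁₂, s₂₃⟩
      obtain ⟨a, ha1, _⟩ := Finset.exists_of_ssubset s₀₁
      obtain ⟨b, hb2, hb1⟩ := Finset.exists_of_ssubset s₁₂
      obtain ⟨c, hc3, hc2⟩ := Finset.exists_of_ssubset s₂₃
      exact ⟨a, b, c, h₁.1 ha1, h₂.1 hb2, h₃.1 hc3,
        fun h => hb1 (closed T₁ h₁ a ha1 b h),
        fun h => hc2 (closed T₂ h₂ b hb2 c h),
        fun h => hc2 (closed T₂ h₂ a (s₁₂.1 ha1) c h)⟩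
    · rintro ⟨a, b, c, haV, hbV, hcV, hab, hbc, hac⟩
      have comp_mem : ∀ v : α, (V.filter (fun w => Relation.ReflTransGen (DefAdj V H) v w)) ∈ TofH V H := by
        intro v
        refine ⟨Finset.filter_subset _ _, fun x hx p hpV hpT => ?_⟩
        by_contra hH'
        simp only [Finset.mem_filter] at hx
        refine hpT (Finset.mem_filter.2 ⟨hpV, hx.2.tail
          ⟨hx.1, hpV, fun h => hpT ?_, hH'⟩⟩)
        exact Finset.mem_filter.2 ⟨hpV, h ▸ hx.2⟩
      have union_mem : ∀ T ∈ TofH V H, ∀ S ∈ TofH V H, T ∪ S ∈ TofH V H := by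
        rintro T ⟨hTV, hT⟩ S ⟨hSV, hS⟩
        refine ⟨Finset.union_subset hTV hSV, fun x hx p hpV hpT => ?_⟩
        rcases Finset.mem_union.1 hx with hx | hx
        · exact hT x hx p hpV (fun h => hpT (Finset.mem_union_left _ h))
        · exact hS x hx p hpV (fun h => hpT (Finset.mem_union_right _ h))
      set Ca := V.filter (fun w => Relation.ReflTransGen (DefAdj V H) a w) with hCa
      set Cb := V.filter (fun w => Relation.ReflTransGen (DefAdj V H) b w) with hCb
      refine ⟨∅, Ca, Ca ∪ Cb, V, ⟨Finset.empty_subset _, by simp⟩, comp_mem a,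
        union_mem _ (comp_mem a) _ (comp_mem b),
        ⟨le_refl _, fun x _ p hpV hpT => absurd hpV hpT⟩, ?_, ?_, ?_⟩
      · refine Finset.ssubset_iff_of_subset (Finset.empty_subset _) |>.2 ⟨a, ?_, by simp⟩
        exact Finset.mem_filter.2 ⟨haV, Relation.ReflTransGen.refl⟩
      · refine Finset.ssubset_iff_of_subset Finset.subset_union_left |>.2 ⟨b, ?_, ?_⟩
        · exact Finset.mem_union_right _ (Finset.mem_filter.2 ⟨hbV, Relation.ReflTransGen.refl⟩)
        · intro h
          exact hab (Finset.mem_filter.1 h).2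
      · refine Finset.ssubset_iff_of_subset (Finset.union_subset (Finset.filter_subset _ _)
          (Finset.filter_subset _ _)) |>.2 ⟨c, hcV, ?_⟩
        intro h
        rcases Finset.mem_union.1 h with h | h
        · exact hac (Finset.mem_filter.1 h).2
        · exact hbc (Finset.mem_filter.1 h).2
end
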